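/- For 0 < q < 1 and a complex number s with Re(s) > 0, the q-zeta function ζ_q(s) = \sum_{n \geq 1} (q^n/[n]_q)^s converges absolutely, and satisfies the translation formula q^s = (1 - q^s) ζ_q(s) + q^s \sum_{k \geq 0} (-1)^k \frac{s(s+1)\cdots(s+k)}{(k+1)!} ζ_q(s+k+1), where the series over k converges absolutely. -/

import Mathlib

open Complex

/-- The q-analogue `[n]_q = (1 - q^n)/(1 - q)`. -/
noncomputable def qNum (q : ℝ) (n : ℕ) : ℝ := (1 - q ^ n) / (1 - q)

/-- The SZ model q-zeta function `ζ_q(s) = ∑_{n ≥ 1} (q^n/[n]_q)^s`. -/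
noncomputable def qZeta (q : ℝ) (s : ℂ) : ℂ :=
  ∑' n : ℕ, ((q ^ (n + 1) / qNum q (n + 1) : ℝ) : ℂ) ^ s

private noncomputable def qc (s : ℂ) (k : ℕ) : ℂ :=
  (-1 : ℂ) ^ k * (∏ i ∈ Finset.range (k + 1), (s + (i : ℂ))) / ((k + 1).factorial : ℂ)



private lemma isOpen_slit' : IsOpen {z : ℂ | 1 + z ∈ Complex.slitPlane} :=
  Complex.isOpen_slitPlane.preimage (continuous_const.add continuous_id)

private lemma hasDerivAt_one_add_cpow (a : ℂ) {z : ℂ} (hz : 1 + z ∈ Complex.slitPlane) :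
    HasDerivAt (fun w : ℂ => (1 + w) ^ a) (a * (1 + z) ^ (a - 1)) z := by
  have h1 : HasDerivAt (fun w : ℂ => 1 + w) 1 z := (hasDerivAt_id z).const_add 1
  simpa using h1.cpow_const hz

private lemma iteratedDeriv_one_add_cpow (n : ℕ) :
    ∀ (C a : ℂ) (z : ℂ), 1 + z ∈ Complex.slitPlane →
      iteratedDeriv n (fun w : ℂ => C * (1 + w) ^ a) z
        = C * (∏ i ∈ Finset.range n, (a - (i : ℂ))) * (1 + z) ^ (a - n) := by
  induction n with
  | zero => intro C a z hz; simp
  | succ n ih =>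
    intro C a z hz
    rw [iteratedDeriv_succ']
    have hev : deriv (fun w : ℂ => C * (1 + w) ^ a)
        =ᶠ[nhds z] fun w : ℂ => (C * a) * (1 + w) ^ (a - 1) := by
      filter_upwards [isOpen_slit'.mem_nhds hz] with w hw
      rw [((hasDerivAt_one_add_cpow a hw).const_mul C).deriv]; ring
    rw [Filter.EventuallyEq.iteratedDeriv_eq n hev, ih (C * a) (a - 1) z hz]
    have hprod : ∏ i ∈ Finset.range (n + 1), (a - (i : ℂ))
        = a * ∏ i ∈ Finset.range n, (a - 1 - (i : ℂ)) := by
      rw [Finset.prod_range_succ']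
      rw [Finset.prod_congr rfl (fun i _ => by push_cast; ring_nf :
        ∀ i ∈ Finset.range n, (a - ((i + 1 : ℕ) : ℂ)) = (a - 1 - (i : ℂ)))]
      push_cast; ring
    have hexp : a - ((n : ℂ) + 1) = a - 1 - n := by ring
    rw [hprod]
    push_cast
    rw [hexp]
    ring

private lemma hasSum_binomial (s : ℂ) {x : ℝ} (hx0 : 0 < x) (hx1 : x < 1) :
    HasSum (fun k : ℕ => qc s k * (x : ℂ) ^ (k + 1)) (1 - ((1 + x : ℝ) : ℂ) ^ (-s)) := by
  have hslit : ∀ z : ℂ, z ∈ Metric.ball (0 : ℂ) 1 → 1 + z ∈ Complex.slitPlane := by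
    intro z hz
    rw [Metric.mem_ball, dist_zero_right] at hz
    refine Or.inl ?_
    have h2 : |z.re| < 1 := lt_of_le_of_lt (Complex.abs_re_le_norm z) hz
    simp only [Complex.add_re, Complex.one_re]
    linarith [(abs_lt.mp h2).1]
  have hdiff : DifferentiableOn ℂ (fun w : ℂ => 1 * (1 + w) ^ (-s)) (Metric.ball (0:ℂ) 1) := by
    intro z hz
    exact (((hasDerivAt_one_add_cpow (-s) (hslit z hz)).const_mul 1).differentiableAt).differentiableWithinAt
  have hmem : (x : ℂ) ∈ Metric.ball (0 : ℂ) 1 := by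
    rw [Metric.mem_ball, dist_zero_right, Complex.norm_real, Real.norm_eq_abs, abs_of_pos hx0]
    exact hx1
  have H := Complex.hasSum_taylorSeries_on_ball hdiff hmem
  have hD : ∀ k : ℕ, iteratedDeriv k (fun w : ℂ => 1 * (1 + w) ^ (-s)) 0
      = (-1 : ℂ) ^ k * ∏ i ∈ Finset.range k, (s + (i : ℂ)) := by
    intro k
    rw [iteratedDeriv_one_add_cpow k 1 (-s) 0 (by norm_num [Complex.slitPlane])]
    have h1 : (1 : ℂ) + 0 = 1 := by ring
    rw [h1, Complex.one_cpow, one_mul, mul_one]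
    rw [Finset.prod_congr rfl (fun i _ => by ring :
      ∀ i ∈ Finset.range k, (-s - (i : ℂ)) = -1 * (s + (i : ℂ)))]
    rw [Finset.prod_mul_distrib, Finset.prod_const, Finset.card_range]
  have H2 : HasSum (fun k : ℕ => ((k.factorial : ℂ))⁻¹ * ((-1 : ℂ) ^ k * ∏ i ∈ Finset.range k, (s + (i : ℂ))) * (x:ℂ) ^ k)
      (((1 + x : ℝ) : ℂ) ^ (-s)) := by
    have hval : 1 * ((1:ℂ) + (x:ℂ)) ^ (-s) = ((1 + x : ℝ) : ℂ) ^ (-s) := by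
      push_cast; ring_nf
    have hfun : (fun k : ℕ => ((k.factorial : ℂ))⁻¹ * ((-1 : ℂ) ^ k * ∏ i ∈ Finset.range k, (s + (i : ℂ))) * (x:ℂ) ^ k)
        = fun k : ℕ => ((k.factorial : ℂ))⁻¹ • ((x:ℂ) - 0) ^ k • iteratedDeriv k (fun w : ℂ => 1 * (1 + w) ^ (-s)) 0 := by
      funext k
      rw [hD k]
      simp only [smul_eq_mul, sub_zero]
      ring
    rw [hfun, ← hval]
    exact H
  have H3 := (hasSum_nat_add_iff' (f := fun k : ℕ => ((k.factorial : ℂ))⁻¹ * ((-1 : ℂ) ^ k * ∏ i ∈ Finset.range k, (s + (i : ℂ))) * (x:ℂ) ^ k) 1).mpr H2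
  simp only [Finset.range_one, Finset.sum_singleton, Nat.factorial_zero, Nat.cast_one, inv_one,
    pow_zero, Finset.range_zero, Finset.prod_empty, mul_one, one_mul] at H3
  have H4 := H3.neg
  rw [neg_sub] at H4
  refine H4.congr_fun ?_
  intro k
  show qc s k * (x : ℂ) ^ (k + 1) = -(((k+1).factorial : ℂ)⁻¹ * ((-1 : ℂ) ^ (k+1) * ∏ i ∈ Finset.range (k+1), (s + (i : ℂ))) * (x:ℂ) ^ (k+1))
  rw [qc]
  rw [pow_succ]
  field_simp
  ring

set_option maxHeartbeats 1000000 in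
theorem qZeta_translation (q : ℝ) (hq0 : 0 < q) (hq1 : q < 1)
    (s : ℂ) (hs : 0 < s.re) :
    Summable (fun n : ℕ => ‖((q ^ (n + 1) / qNum q (n + 1) : ℝ) : ℂ) ^ s‖) ∧
    Summable (fun k : ℕ =>
      ‖(-1 : ℂ) ^ k * (∏ i ∈ Finset.range (k + 1), (s + (i : ℂ))) /
        ((k + 1).factorial : ℂ) * qZeta q (s + (k : ℂ) + 1)‖) ∧
    (q : ℂ) ^ s = (1 - (q : ℂ) ^ s) * qZeta q s +
      (q : ℂ) ^ s * ∑' k : ℕ,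
        (-1 : ℂ) ^ k * (∏ i ∈ Finset.range (k + 1), (s + (i : ℂ))) /
          ((k + 1).factorial : ℂ) * qZeta q (s + (k : ℂ) + 1) := by
  have hq1' : (0:ℝ) < 1 - q := by linarith
  set t : ℕ → ℝ := fun n => q ^ (n + 1) / qNum q (n + 1) with ht_def
  have hqn : ∀ n : ℕ, q ^ (n+1) < 1 := fun n => pow_lt_one₀ hq0.le hq1 (Nat.succ_ne_zero n)
  have hqle : ∀ n : ℕ, q ^ (n+1) ≤ q := by
    intro n
    calc q ^ (n+1) ≤ q ^ 1 := pow_le_pow_of_le_one hq0.le hq1.le (by omega)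
    _ = q := pow_one q
  have hqnum_pos : ∀ n : ℕ, 0 < qNum q (n+1) :=
    fun n => div_pos (by linarith [hqn n]) hq1'
  have ht_pos : ∀ n, 0 < t n := fun n => div_pos (pow_pos hq0 _) (hqnum_pos n)
  have ht_le : ∀ n, t n ≤ q ^ (n+1) := by
    intro n
    have h1 : (1:ℝ) ≤ qNum q (n+1) := by
      rw [qNum, le_div_iff₀ hq1']
      linarith [hqle n]
    calc t n ≤ q^(n+1) / 1 := by
          exact div_le_div_of_nonneg_left (pow_pos hq0 _).le one_pos h1
    _ = q ^ (n+1) := div_one _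
  have ht_lt1 : ∀ n, t n < 1 := fun n => lt_of_le_of_lt (ht_le n) (hqn n)
  have ht_ne : ∀ n, ((t n : ℝ) : ℂ) ≠ 0 := fun n => Complex.ofReal_ne_zero.mpr (ht_pos n).ne'
  have ht_eq : ∀ n, t n = q ^ (n+1) * (1 - q) / (1 - q ^ (n+1)) := by
    intro n
    rw [ht_def]
    show q ^ (n + 1) / qNum q (n+1) = _
    rw [qNum, div_div_eq_mul_div]
  have h1pt : ∀ n, 1 + t n = (1 - q ^ (n+2)) / (1 - q ^ (n+1)) := by
    intro n
    have hne : (1 - q ^ (n+1)) ≠ 0 := by linarith [hqn n]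
    rw [ht_eq n, eq_div_iff hne, add_mul, div_mul_cancel₀ _ hne]
    ring
  have hkey : ∀ n, q * (t n / (1 + t n)) = t (n+1) := by
    intro n
    have hne1 : (1 - q ^ (n+1)) ≠ 0 := by linarith [hqn n]
    have hne2 : (1 - q ^ (n+2)) ≠ 0 := by linarith [hqn (n+1)]
    rw [h1pt n, ht_eq n, ht_eq (n+1)]
    field_simp
    ring
  -- norms
  have hnorm : ∀ (n : ℕ) (w : ℂ), ‖((t n : ℝ) : ℂ) ^ w‖ = (t n) ^ w.re := by
    intro n w
    rw [Complex.norm_cpow_eq_rpow_re_of_pos (ht_pos n)]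
  -- summability of the zeta series for any exponent with positive real part
  have hsumA : ∀ w : ℂ, 0 < w.re → Summable (fun n : ℕ => ‖((t n : ℝ) : ℂ) ^ w‖) := by
    intro w hw
    have hgeo : Summable (fun n : ℕ => (q ^ w.re) ^ (n+1)) := by
      have h0 : (0:ℝ) ≤ q ^ w.re := Real.rpow_nonneg hq0.le _
      have h1 : q ^ w.re < 1 := Real.rpow_lt_one hq0.le hq1 hw
      exact ((summable_geometric_of_lt_one h0 h1).mul_left (q ^ w.re)).congr
        (fun n => by rw [← pow_succ'])
    refine Summable.of_nonneg_of_le (fun n => norm_nonneg _) (fun n => ?_) hgeo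
    rw [hnorm n w]
    calc (t n) ^ w.re ≤ (q ^ (n+1)) ^ w.re :=
          Real.rpow_le_rpow (ht_pos n).le (ht_le n) hw.le
    _ = (q ^ w.re) ^ (n+1) := by
          rw [← Real.rpow_natCast q (n+1), ← Real.rpow_natCast (q ^ w.re) (n+1),
            ← Real.rpow_mul hq0.le, ← Real.rpow_mul hq0.le, mul_comm]
  -- recurrence for qc, ratio test summability of ‖qc s k‖ * q ^ k
  have hfac_ne : ∀ m : ℕ, ((m.factorial : ℂ)) ≠ 0 :=
    fun m => Nat.cast_ne_zero.mpr (Nat.factorial_ne_zero m)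
  have hstep : ∀ k : ℕ, qc s (k+1) = qc s k * (-(s + (k:ℂ) + 1)) / ((k:ℂ) + 2) := by
    intro k
    rw [qc, qc, Finset.prod_range_succ, Nat.factorial_succ (k+1)]
    have h1 := hfac_ne (k+1)
    have h2 : ((k:ℂ) + 2) ≠ 0 := by
      have : ((k + 2 : ℕ) : ℂ) ≠ 0 := Nat.cast_ne_zero.mpr (by omega)
      push_cast at this
      convert this using 2
    have h3 : ((k:ℂ) + 1 + 1) ≠ 0 := by intro h; apply h2; linear_combination h
    push_cast
    field_simp
    ring
  have hnormstep : ∀ k : ℕ, ‖qc s (k+1)‖ = ‖qc s k‖ * (‖s + (k:ℂ) + 1‖ / ((k:ℝ) + 2)) := by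
    intro k
    rw [hstep k, norm_div, norm_mul, norm_neg]
    have : ‖(k:ℂ) + 2‖ = (k:ℝ) + 2 := by
      have : ((k:ℂ) + 2) = ((k + 2 : ℕ) : ℂ) := by push_cast; ring
      rw [this, Complex.norm_natCast]
      push_cast; ring
    rw [this, mul_div_assoc]
  set v : ℕ → ℝ := fun k => ‖qc s k‖ * q ^ k with hv_def
  have hv_nonneg : ∀ k, 0 ≤ v k := fun k => mul_nonneg (norm_nonneg _) (pow_nonneg hq0.le _)
  have hv : Summable v := by
    set r : ℝ := (1 + q) / 2 with hr_def
    have hrq : q < r := by rw [hr_def]; linarith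
    have hr1 : r < 1 := by rw [hr_def]; linarith
    apply summable_of_ratio_norm_eventually_le hr1
    rw [Filter.eventually_atTop]
    refine ⟨⌈q * ‖s‖ / (r - q)⌉₊, fun k hk => ?_⟩
    have hkge : q * ‖s‖ / (r - q) ≤ (k : ℝ) := le_trans (Nat.le_ceil _) (by exact_mod_cast hk)
    have hrq' : (0:ℝ) < r - q := by linarith
    have h1 : q * ‖s‖ ≤ (r - q) * k := by
      rw [div_le_iff₀ hrq'] at hkge
      linarith [hkge]
    have hsk : ‖s + (k:ℂ) + 1‖ ≤ ‖s‖ + ((k:ℝ) + 1) := by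
      rw [add_assoc]
      refine (norm_add_le _ _).trans ?_
      have : ((k:ℂ) + 1) = ((k + 1 : ℕ) : ℂ) := by push_cast; ring
      rw [this, Complex.norm_natCast]
      push_cast
      linarith
    have hq2 : q * ‖s + (k:ℂ) + 1‖ ≤ r * ((k:ℝ) + 2) := by
      have := mul_le_mul_of_nonneg_left hsk hq0.le
      nlinarith [this, h1]
    rw [Real.norm_of_nonneg (hv_nonneg (k+1)), Real.norm_of_nonneg (hv_nonneg k)]
    show ‖qc s (k+1)‖ * q ^ (k+1) ≤ r * (‖qc s k‖ * q ^ k)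
    rw [hnormstep k, pow_succ]
    have hk2 : (0:ℝ) < (k:ℝ) + 2 := by positivity
    have hqD : q * ‖s + (k:ℂ) + 1‖ / ((k:ℝ) + 2) ≤ r :=
      (div_le_iff₀ hk2).mpr (by linarith [hq2])
    calc ‖qc s k‖ * (‖s + (k:ℂ) + 1‖ / ((k:ℝ) + 2)) * (q ^ k * q)
        = (‖qc s k‖ * q ^ k) * (q * ‖s + (k:ℂ) + 1‖ / ((k:ℝ) + 2)) := by ring
    _ ≤ (‖qc s k‖ * q ^ k) * r :=
          mul_le_mul_of_nonneg_left hqD (by positivity)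
    _ = r * (‖qc s k‖ * q ^ k) := by ring
  -- bound for the double series
  have hbound : ∀ n k : ℕ, ‖(q:ℂ)^s * (qc s k * ((t n :ℝ):ℂ) ^ (s + (k:ℂ) + 1))‖
      ≤ (‖(q:ℂ)^s‖ * q ^ (n+1)) * v k := by
    intro n k
    rw [norm_mul, norm_mul, hnorm n]
    have hre : (s + (k:ℂ) + 1).re = s.re + ((k:ℝ) + 1) := by
      simp [Complex.add_re]
      ring
    rw [hre]
    have hsplit : t n ^ (s.re + ((k:ℝ)+1)) = t n ^ s.re * t n ^ (k+1 : ℕ) := by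
      rw [Real.rpow_add (ht_pos n), ← Real.rpow_natCast (t n) (k+1)]
      push_cast
      ring_nf
    have h1 : t n ^ s.re ≤ 1 := Real.rpow_le_one (ht_pos n).le (ht_lt1 n).le hs.le
    have h2 : t n ^ (k+1:ℕ) ≤ q ^ (n+1) * q ^ k := by
      calc t n ^ (k+1) ≤ (q ^ (n+1)) ^ (k+1) := pow_le_pow_left₀ (ht_pos n).le (ht_le n) (k+1)
      _ = q ^ ((n+1)*(k+1)) := (pow_mul q (n+1) (k+1)).symm
      _ ≤ q ^ (n+1+k) := pow_le_pow_of_le_one hq0.le hq1.le (by nlinarith)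
      _ = q ^ (n+1) * q ^ k := pow_add q (n+1) k
    rw [hsplit]
    have h3 : t n ^ s.re * t n ^ (k+1:ℕ) ≤ 1 * (q ^ (n+1) * q ^ k) :=
      mul_le_mul h1 h2 (pow_nonneg (ht_pos n).le _) one_pos.le
    rw [one_mul] at h3
    calc ‖(q:ℂ)^s‖ * (‖qc s k‖ * (t n ^ s.re * t n ^ (k+1:ℕ)))
        ≤ ‖(q:ℂ)^s‖ * (‖qc s k‖ * (q ^ (n+1) * q ^ k)) := by
          refine mul_le_mul_of_nonneg_left ?_ (norm_nonneg _)
          exact mul_le_mul_of_nonneg_left h3 (norm_nonneg _)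
    _ = (‖(q:ℂ)^s‖ * q ^ (n+1)) * v k := by rw [hv_def]; ring
  have hu : Summable (fun n : ℕ => ‖(q:ℂ)^s‖ * q ^ (n+1)) := by
    refine ((summable_geometric_of_lt_one hq0.le hq1).mul_left (‖(q:ℂ)^s‖ * q)).congr
      (fun n => ?_)
    rw [pow_succ']
    ring
  have hGnorm : Summable (fun p : ℕ × ℕ =>
      ‖(q:ℂ)^s * (qc s p.2 * ((t p.1:ℝ):ℂ) ^ (s + (p.2:ℂ) + 1))‖) := by
    refine Summable.of_nonneg_of_le (fun p => norm_nonneg _) (fun p => hbound p.1 p.2) ?_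
    exact hu.mul_of_nonneg hv (fun n => by positivity) hv_nonneg
  have hG : Summable (Function.uncurry
      (fun n k : ℕ => (q:ℂ)^s * (qc s k * ((t n:ℝ):ℂ) ^ (s + (k:ℂ) + 1)))) :=
    Summable.of_norm (by simpa [Function.uncurry] using hGnorm)
  -- per-row has-sum
  have hrow : ∀ n : ℕ, HasSum (fun k : ℕ => (q:ℂ)^s * (qc s k * ((t n:ℝ):ℂ) ^ (s + (k:ℂ) + 1)))
      ((q:ℂ)^s * ((t n:ℝ):ℂ)^s - ((t (n+1):ℝ):ℂ)^s) := by
    intro n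
    have hb := (hasSum_binomial s (ht_pos n) (ht_lt1 n)).mul_left ((q:ℂ)^s * ((t n:ℝ):ℂ)^s)
    have hterm : ∀ k : ℕ, (q:ℂ)^s * (qc s k * ((t n:ℝ):ℂ) ^ (s + (k:ℂ) + 1))
        = (q:ℂ)^s * ((t n:ℝ):ℂ)^s * (qc s k * ((t n:ℝ):ℂ) ^ (k+1)) := by
      intro k
      have hx : ((t n:ℝ):ℂ) ^ (s + (k:ℂ) + 1) = ((t n:ℝ):ℂ)^s * ((t n:ℝ):ℂ)^(k+1) := by
        rw [add_assoc, Complex.cpow_add _ _ (ht_ne n)]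
        congr 1
        have h1 : ((k:ℂ) + 1) = ((k+1 : ℕ) : ℂ) := by push_cast; ring
        rw [h1, Complex.cpow_natCast]
      rw [hx]; ring
    have harg : ((1 + t n : ℝ):ℂ).arg ≠ Real.pi := by
      rw [Complex.arg_ofReal_of_nonneg (by linarith [ht_pos n])]
      exact Real.pi_ne_zero.symm
    have hB : ((1 + t n : ℝ):ℂ) ^ (-s) = (((1 + t n)⁻¹ : ℝ) : ℂ) ^ s := by
      rw [Complex.ofReal_inv, Complex.inv_cpow _ _ harg, ← Complex.cpow_neg]
    have h1tn : (0:ℝ) < 1 + t n := by linarith [ht_pos n]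
    have h5 : ((t n :ℝ):ℂ)^s * ((1 + t n :ℝ):ℂ)^(-s) = (((t n / (1 + t n)) : ℝ) : ℂ)^s := by
      rw [hB, ← Complex.mul_cpow_ofReal_nonneg (ht_pos n).le (inv_nonneg.mpr h1tn.le),
        ← Complex.ofReal_mul, ← div_eq_mul_inv]
    have h6 : (q:ℂ)^s * (((t n / (1 + t n)) : ℝ) : ℂ)^s = ((t (n+1) : ℝ) : ℂ)^s := by
      rw [← Complex.mul_cpow_ofReal_nonneg hq0.le (div_nonneg (ht_pos n).le h1tn.le),
        ← Complex.ofReal_mul, hkey n]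
    have hval : (q:ℂ)^s * ((t n:ℝ):ℂ)^s * (1 - ((1 + t n :ℝ):ℂ)^(-s))
        = (q:ℂ)^s * ((t n:ℝ):ℂ)^s - ((t (n+1):ℝ):ℂ)^s := by
      rw [mul_sub, mul_one, mul_assoc, h5, h6]
    rw [hval] at hb
    exact hb.congr_fun hterm
  -- telescoping
  have hT : Summable (fun n : ℕ => ((t n:ℝ):ℂ)^s) := Summable.of_norm (hsumA s hs)
  have hT1 : Summable (fun n : ℕ => ((t (n+1):ℝ):ℂ)^s) := (summable_nat_add_iff 1).mpr hT
  have hZ : qZeta q s = ∑' n, ((t n:ℝ):ℂ)^s := rfl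
  have ht0 : t 0 = q := by
    show q ^ (0+1) / qNum q (0+1) = q
    norm_num [qNum, div_self hq1'.ne']
  have htel : ∑' n : ℕ, ((q:ℂ)^s * ((t n:ℝ):ℂ)^s - ((t (n+1):ℝ):ℂ)^s)
      = (q:ℂ)^s * qZeta q s - (qZeta q s - (q:ℂ)^s) := by
    rw [Summable.tsum_sub (hT.mul_left _) hT1, tsum_mul_left, ← hZ]
    congr 1
    have h0 := Summable.tsum_eq_zero_add hT
    rw [hZ, h0, ht0]
    ring
  -- column sums
  have hcol : ∀ k : ℕ, ∑' n : ℕ, ((q:ℂ)^s * (qc s k * ((t n:ℝ):ℂ) ^ (s + (k:ℂ) + 1)))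
      = (q:ℂ)^s * (qc s k * qZeta q (s + (k:ℂ) + 1)) := by
    intro k
    have hZk : qZeta q (s + (k:ℂ) + 1) = ∑' n, ((t n:ℝ):ℂ) ^ (s + (k:ℂ) + 1) := rfl
    rw [tsum_mul_left, hZk, tsum_mul_left]
  have hswap := Summable.tsum_comm (f := fun n k : ℕ => (q:ℂ)^s * (qc s k * ((t n:ℝ):ℂ) ^ (s + (k:ℂ) + 1))) hG
  have hmain : (q:ℂ)^s * ∑' k : ℕ, (qc s k * qZeta q (s + (k:ℂ) + 1))
      = (q:ℂ)^s * qZeta q s - (qZeta q s - (q:ℂ)^s) := by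
    calc (q:ℂ)^s * ∑' k : ℕ, (qc s k * qZeta q (s + (k:ℂ) + 1))
        = ∑' k : ℕ, (q:ℂ)^s * (qc s k * qZeta q (s + (k:ℂ) + 1)) := tsum_mul_left.symm
    _ = ∑' k : ℕ, ∑' n : ℕ, ((q:ℂ)^s * (qc s k * ((t n:ℝ):ℂ) ^ (s + (k:ℂ) + 1))) :=
          tsum_congr (fun k => (hcol k).symm)
    _ = ∑' n : ℕ, ∑' k : ℕ, ((q:ℂ)^s * (qc s k * ((t n:ℝ):ℂ) ^ (s + (k:ℂ) + 1))) := hswap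
    _ = ∑' n : ℕ, ((q:ℂ)^s * ((t n:ℝ):ℂ)^s - ((t (n+1):ℝ):ℂ)^s) :=
          tsum_congr (fun n => (hrow n).tsum_eq)
    _ = (q:ℂ)^s * qZeta q s - (qZeta q s - (q:ℂ)^s) := htel
  -- second summability claim
  have hqs_ne : ((q:ℂ))^s ≠ 0 := by
    intro h
    rw [Complex.cpow_eq_zero_iff] at h
    exact (Complex.ofReal_ne_zero.mpr hq0.ne') h.1
  have hqs_pos : 0 < ‖(q:ℂ)^s‖ := norm_pos_iff.mpr hqs_ne
  have hsum2 : Summable (fun k : ℕ => ‖qc s k * qZeta q (s + (k:ℂ) + 1)‖) := by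
    have hks : Summable (fun k : ℕ =>
        ∑' n : ℕ, ‖(q:ℂ)^s * (qc s k * ((t n:ℝ):ℂ) ^ (s + (k:ℂ) + 1))‖) := by
      have := (summable_prod_of_nonneg (f := fun p : ℕ × ℕ =>
        ‖(q:ℂ)^s * (qc s p.2 * ((t p.1:ℝ):ℂ) ^ (s + (p.2:ℂ) + 1))‖) (fun p => norm_nonneg _))
      exact ((summable_prod_of_nonneg (fun p => norm_nonneg _)).mp hGnorm.prod_symm).2
    refine Summable.of_nonneg_of_le (fun k => norm_nonneg _) (fun k => ?_)
      (hks.mul_left (‖(q:ℂ)^s‖⁻¹))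
    have hfib : Summable (fun n : ℕ =>
        ‖(q:ℂ)^s * (qc s k * ((t n:ℝ):ℂ) ^ (s + (k:ℂ) + 1))‖) := hGnorm.prod_symm.prod_factor k
    have hle : ‖(q:ℂ)^s * (qc s k * qZeta q (s + (k:ℂ) + 1))‖
        ≤ ∑' n : ℕ, ‖(q:ℂ)^s * (qc s k * ((t n:ℝ):ℂ) ^ (s + (k:ℂ) + 1))‖ := by
      rw [← hcol k]
      exact norm_tsum_le_tsum_norm hfib
    rw [norm_mul] at hle
    rw [← inv_mul_cancel_left₀ hqs_pos.ne' ‖qc s k * qZeta q (s + (k:ℂ) + 1)‖]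
    exact mul_le_mul_of_nonneg_left hle (by positivity)
  refine ⟨hsumA s hs, hsum2, ?_⟩
  show (q : ℂ) ^ s = (1 - (q : ℂ) ^ s) * qZeta q s +
      (q : ℂ) ^ s * ∑' k : ℕ, qc s k * qZeta q (s + (k : ℂ) + 1)
  linear_combination -hmain
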